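/- Let ε ∈ (0, 1/2). Define w(s) ∈ (0,1) by w(s)(2 − w(s)) = s² for s ∈ (0, 1/5] (so w(s) = 1 − √(1 − s²) ≤ s²). Then for any α ∈ (0,1) there is a constant C independent of ε such that ∫₀^{1/5} ε (w(s) + ε) s^{2+α} / ((w(s) − ε)² + s²)^{5/2} ds ≤ C ε^α. -/

import Mathlib

open Real intervalIntegral

private lemma sqrt_le_one' {x : ℝ} (hx : x ≤ 1) : Real.sqrt x ≤ 1 := by
  have := Real.sqrt_le_sqrt hx
  rwa [Real.sqrt_one] at this

noncomputable def wfn (s : ℝ) : ℝ := 1 - Real.sqrt (1 - s ^ 2)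

noncomputable def ffn (ε α s : ℝ) : ℝ :=
  ε * (wfn s + ε) * s ^ ((2 : ℝ) + α) / ((wfn s - ε) ^ 2 + s ^ 2) ^ ((5 : ℝ) / 2)

private lemma wz_nonneg (s : ℝ) : 0 ≤ wfn s := by
  have h : Real.sqrt (1 - s ^ 2) ≤ 1 := sqrt_le_one' (by nlinarith [sq_nonneg s])
  simp only [wfn]; linarith

private lemma wz_le_sq {s : ℝ} (hs1 : s ^ 2 ≤ 1) : wfn s ≤ s ^ 2 := by
  have h0 : (0:ℝ) ≤ 1 - s ^ 2 := by linarith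
  have h1 := Real.sq_sqrt h0
  have h2 := Real.sqrt_nonneg (1 - s ^ 2)
  have h3 : Real.sqrt (1 - s ^ 2) ≤ 1 := sqrt_le_one' (by nlinarith [sq_nonneg s])
  simp only [wfn]; nlinarith

private lemma bq_pos {ε : ℝ} (hε : 0 < ε) (s : ℝ) : 0 < (wfn s - ε) ^ 2 + s ^ 2 := by
  rcases eq_or_ne s 0 with h | h
  · subst h
    have hw : wfn 0 = 0 := by simp [wfn]
    rw [hw]
    have : (0 - ε) ^ 2 + (0:ℝ) ^ 2 = ε ^ 2 := by ring
    rw [this]; positivity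
  · exact add_pos_of_nonneg_of_pos (sq_nonneg _) (by positivity)

private lemma wfn_cont : Continuous wfn := by
  unfold wfn
  exact continuous_const.sub
    (Real.continuous_sqrt.comp (continuous_const.sub (continuous_pow 2)))

private lemma ffn_cont {ε α : ℝ} (hε : 0 < ε) (hα : 0 < α) : Continuous (ffn ε α) := by
  unfold ffn
  apply Continuous.div
  · exact (continuous_const.mul (wfn_cont.add continuous_const)).mul
      (continuous_iff_continuousAt.2 fun x =>
        Real.continuousAt_rpow_const x _ (Or.inr (by linarith)))
  · exact continuous_iff_continuousAt.2 fun x =>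
      (((wfn_cont.sub continuous_const).pow 2).add (continuous_pow 2)).continuousAt.rpow_const
        (Or.inr (by norm_num))
  · intro s
    exact (Real.rpow_pos_of_pos (bq_pos hε s) _).ne'

/-- Pointwise bound on the inner region `0 ≤ s ≤ ε`. -/
private lemma bound_inner {ε α s : ℝ} (hα0 : 0 < α) (hε0 : 0 < ε) (hε2 : ε < 1/2)
    (hs0 : 0 ≤ s) (hsε : s ≤ ε) : ffn ε α s ≤ 16 * ε⁻¹ * s ^ α := by
  rcases eq_or_lt_of_le hs0 with h | hs0'
  · simp [ffn, ← h, Real.zero_rpow (by linarith : (2:ℝ) + α ≠ 0), Real.zero_rpow hα0.ne']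
  have hs1 : s ^ 2 ≤ 1 := by nlinarith
  have hw2 : wfn s ≤ s ^ 2 := wz_le_sq hs1
  have hw0 : 0 ≤ wfn s := wz_nonneg s
  have hsp : (0:ℝ) ≤ s ^ ((2:ℝ) + α) := Real.rpow_nonneg hs0 _
  have h1 : s ^ 2 ≤ ε ^ 2 := by nlinarith
  have h2 : ε ^ 2 ≤ ε / 2 := by nlinarith
  have hnum : ε * (wfn s + ε) * s ^ ((2:ℝ) + α) ≤ 2 * ε^2 * s ^ ((2:ℝ) + α) := by
    have hwε : wfn s + ε ≤ 2 * ε := by nlinarith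
    nlinarith [mul_le_mul_of_nonneg_right hwε hsp]
  have hbpos : 0 < (wfn s - ε) ^ 2 + s ^ 2 := bq_pos hε0 s
  have hεw : ε / 2 ≤ ε - wfn s := by linarith
  have hb1 : (ε/2) ^ 2 ≤ (wfn s - ε) ^ 2 := by nlinarith
  have hden : (ε/2)^3 * s^2 ≤ ((wfn s - ε) ^ 2 + s ^ 2) ^ ((5:ℝ)/2) := by
    have hsplitb : ((wfn s - ε) ^ 2 + s ^ 2) ^ ((5:ℝ)/2)
        = ((wfn s - ε) ^ 2 + s ^ 2) ^ ((3:ℝ)/2) * ((wfn s - ε) ^ 2 + s ^ 2) := by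
      have h := Real.rpow_add hbpos ((3:ℝ)/2) 1
      rw [Real.rpow_one] at h
      norm_num at h
      exact h
    have h32 : (ε/2)^3 ≤ ((wfn s - ε) ^ 2 + s ^ 2) ^ ((3:ℝ)/2) := by
      have ha : ((ε/2)^2 : ℝ) ^ ((3:ℝ)/2) ≤ ((wfn s - ε) ^ 2 + s ^ 2) ^ ((3:ℝ)/2) :=
        Real.rpow_le_rpow (by positivity) (by nlinarith [sq_nonneg s]) (by norm_num)
      have hb : ((ε/2)^2 : ℝ) ^ ((3:ℝ)/2) = (ε/2)^3 := by
        rw [← Real.rpow_natCast (ε/2) 2, ← Real.rpow_mul (by positivity),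
          ← Real.rpow_natCast (ε/2) 3]
        norm_num
      linarith
    have hbs : s^2 ≤ (wfn s - ε) ^ 2 + s ^ 2 := by nlinarith [sq_nonneg (wfn s - ε)]
    rw [hsplitb]
    exact mul_le_mul h32 hbs (sq_nonneg s) (Real.rpow_nonneg hbpos.le _)
  have key : ffn ε α s ≤ (2 * ε^2 * s ^ ((2:ℝ) + α)) / ((ε/2)^3 * s^2) := by
    unfold ffn
    exact div_le_div₀ (by positivity) hnum (by positivity) hden
  have heq : (2 * ε^2 * s ^ ((2:ℝ) + α)) / ((ε/2)^3 * s^2) = 16 * ε⁻¹ * s ^ α := by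
    have h2' : s ^ ((2:ℝ)) = s ^ 2 := by
      rw [show ((2:ℝ)) = ((2:ℕ):ℝ) by norm_num, Real.rpow_natCast]
    rw [Real.rpow_add hs0', h2']
    field_simp
    ring
  linarith [heq ▸ key]

/-- Pointwise bound on the outer region `ε ≤ s ≤ 1/5`. -/
private lemma bound_outer {ε α s : ℝ} (hα0 : 0 < α) (hε0 : 0 < ε)
    (hsl : ε ≤ s) (hs5 : s ≤ 1/5) : ffn ε α s ≤ 2 * ε * s ^ (α - 2) := by
  have hs0 : 0 < s := lt_of_lt_of_le hε0 hsl
  have hw2 : wfn s ≤ s ^ 2 := wz_le_sq (by nlinarith)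
  have hw0 : 0 ≤ wfn s := wz_nonneg s
  have hsp : (0:ℝ) ≤ s ^ ((2:ℝ) + α) := Real.rpow_nonneg hs0.le _
  have hnum : ε * (wfn s + ε) * s ^ ((2:ℝ) + α) ≤ 2 * ε * s * s ^ ((2:ℝ) + α) := by
    have hwε : wfn s + ε ≤ 2 * s := by nlinarith
    nlinarith [mul_le_mul_of_nonneg_right hwε hsp]
  have hbpos : 0 < (wfn s - ε) ^ 2 + s ^ 2 := bq_pos hε0 s
  have hden : s^5 ≤ ((wfn s - ε) ^ 2 + s ^ 2) ^ ((5:ℝ)/2) := by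
    have ha : ((s^2 : ℝ)) ^ ((5:ℝ)/2) ≤ ((wfn s - ε) ^ 2 + s ^ 2) ^ ((5:ℝ)/2) :=
      Real.rpow_le_rpow (by positivity) (by nlinarith [sq_nonneg (wfn s - ε)]) (by norm_num)
    have hb : ((s^2 : ℝ)) ^ ((5:ℝ)/2) = s^5 := by
      rw [← Real.rpow_natCast s 2, ← Real.rpow_mul hs0.le, ← Real.rpow_natCast s 5]
      norm_num
    linarith
  have key : ffn ε α s ≤ (2 * ε * s * s ^ ((2:ℝ) + α)) / (s^5) := by
    unfold ffn
    exact div_le_div₀ (by positivity) hnum (by positivity) hden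
  have heq : (2 * ε * s * s ^ ((2:ℝ) + α)) / (s^5) = 2 * ε * s ^ (α - 2) := by
    rw [show ((2:ℝ) + α) = (α - 2) + 4 by ring, Real.rpow_add hs0,
      show s ^ ((4:ℝ)) = s ^ 4 by
        rw [show ((4:ℝ)) = ((4:ℕ):ℝ) by norm_num, Real.rpow_natCast]]
    field_simp
  linarith [heq ▸ key]

/-- Boundary-layer integral estimate: with `w(s) = 1 − √(1 − s²)` (so `w(s)(2−w(s)) = s²`
and `w(s) ≤ s²`), for any `α ∈ (0,1)` there is a constant `C` independent of `ε ∈ (0,1/2)`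
such that `∫₀^{1/5} ε(w(s)+ε) s^{2+α} / ((w(s)−ε)² + s²)^{5/2} ds ≤ C ε^α`. -/
theorem stmt_15 (α : ℝ) (hα : α ∈ Set.Ioo (0 : ℝ) 1) :
    ∃ C : ℝ, 0 < C ∧
      ∀ ε : ℝ, ε ∈ Set.Ioo (0 : ℝ) (1 / 2) →
        (∫ s in (0:ℝ)..(1 / 5),
          ε * ((1 - Real.sqrt (1 - s ^ 2)) + ε) * s ^ ((2 : ℝ) + α) /
            (((1 - Real.sqrt (1 - s ^ 2)) - ε) ^ 2 + s ^ 2) ^ ((5 : ℝ) / 2))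
        ≤ C * ε ^ α := by
  obtain ⟨hα0, hα1⟩ := hα
  refine ⟨16 / (α + 1) + 2 / (1 - α),
    add_pos (div_pos (by norm_num) (by linarith)) (div_pos (by norm_num) (by linarith)), ?_⟩
  rintro ε ⟨hε0, hε2⟩
  have hgoal : (∫ s in (0:ℝ)..(1/5), ffn ε α s)
      ≤ (16 / (α + 1) + 2 / (1 - α)) * ε ^ α := by
    have hfc := ffn_cont hε0 hα0
    set m : ℝ := min ε (1/5) with hmdef
    have hm0 : 0 < m := lt_min hε0 (by norm_num)
    have hm5 : m ≤ 1/5 := min_le_right _ _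
    have hmε : m ≤ ε := min_le_left _ _
    have hsplit : (∫ s in (0:ℝ)..(1/5), ffn ε α s)
        = (∫ s in (0:ℝ)..m, ffn ε α s) + ∫ s in m..(1/5), ffn ε α s :=
      (integral_add_adjacent_intervals (hfc.intervalIntegrable _ _)
        (hfc.intervalIntegrable _ _)).symm
    have hI1 : (∫ s in (0:ℝ)..m, ffn ε α s) ≤ 16 / (α + 1) * ε ^ α := by
      have hmono : (∫ s in (0:ℝ)..m, ffn ε α s) ≤ ∫ s in (0:ℝ)..m, 16 * ε⁻¹ * s ^ α := by
        apply integral_mono_on hm0.le (hfc.intervalIntegrable _ _)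
          ((intervalIntegrable_rpow' (by linarith)).const_mul _)
        intro s hs
        exact bound_inner hα0 hε0 hε2 hs.1 (hs.2.trans hmε)
      have hcomp : (∫ s in (0:ℝ)..m, 16 * ε⁻¹ * s ^ α) ≤ 16 / (α + 1) * ε ^ α := by
        rw [intervalIntegral.integral_const_mul, integral_rpow (Or.inl (by linarith))]
        rw [Real.zero_rpow (by linarith : α + 1 ≠ 0)]
        have hm' : m ^ (α + 1) ≤ ε ^ (α + 1) :=
          Real.rpow_le_rpow hm0.le hmε (by linarith)
        have hε' : ε ^ (α + 1) = ε ^ α * ε := by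
          rw [Real.rpow_add hε0, Real.rpow_one]
        have h1 : 16 * ε⁻¹ * ((m ^ (α+1) - 0) / (α + 1))
            ≤ 16 * ε⁻¹ * ((ε ^ (α+1) - 0) / (α + 1)) := by
          gcongr
        have h2 : 16 * ε⁻¹ * ((ε ^ (α+1) - 0) / (α + 1)) = 16 / (α + 1) * ε ^ α := by
          rw [hε']
          field_simp
          ring
        linarith
      linarith
    have hI2 : (∫ s in m..(1/5), ffn ε α s) ≤ 2 / (1 - α) * ε ^ α := by
      rcases le_or_gt ε (1/5) with h5 | h5
      · have hm' : m = ε := min_eq_left h5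
        rw [hm']
        have hmono : (∫ s in ε..(1/5), ffn ε α s) ≤ ∫ s in ε..(1/5), 2 * ε * s ^ (α - 2) := by
          apply integral_mono_on h5 (hfc.intervalIntegrable _ _)
            ((intervalIntegrable_rpow
              (Or.inr (Set.notMem_uIcc_of_lt hε0 (by norm_num)))).const_mul _)
          intro s hs
          exact bound_outer hα0 hε0 hs.1 hs.2
        have hcomp : (∫ s in ε..(1/5), 2 * ε * s ^ (α - 2)) ≤ 2 / (1 - α) * ε ^ α := by
          rw [intervalIntegral.integral_const_mul,
            integral_rpow (Or.inr ⟨by intro hc; apply hα1.ne; linarith,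
              Set.notMem_uIcc_of_lt hε0 (by norm_num)⟩)]
          have hAB : ((1:ℝ)/5) ^ (α - 2 + 1) ≤ ε ^ (α - 2 + 1) :=
            Real.rpow_le_rpow_of_nonpos hε0 h5 (by linarith)
          have hA0 : (0:ℝ) ≤ ((1:ℝ)/5) ^ (α - 2 + 1) := Real.rpow_nonneg (by norm_num) _
          have hεα : ε * ε ^ (α - 2 + 1) = ε ^ α := by
            nth_rewrite 1 [← Real.rpow_one ε]
            rw [← Real.rpow_add hε0]
            congr 1
            ring
          set A : ℝ := ((1:ℝ)/5) ^ (α - 2 + 1) with hA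
          set B : ℝ := ε ^ (α - 2 + 1) with hB
          have hne1 : α - 2 + 1 ≠ 0 := by intro hc; apply hα1.ne; linarith
          have hne2 : (1:ℝ) - α ≠ 0 := by intro hc; apply hα1.ne'; linarith
          have hrw : 2 * ε * ((A - B) / (α - 2 + 1))
              = (2 * (ε * B) - 2 * (ε * A)) / (1 - α) := by
            field_simp
            ring
          have hεA : 0 ≤ ε * A := mul_nonneg hε0.le hA0
          have hfin : (2 * (ε * B) - 2 * (ε * A)) / (1 - α) ≤ 2 / (1 - α) * ε ^ α := by
            rw [hεα]
            have h1 : (2 * ε ^ α - 2 * (ε * A)) / (1 - α) ≤ (2 * ε ^ α) / (1 - α) := by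
              gcongr
              · linarith [hα1]
            have h2 : (2 * ε ^ α) / (1 - α) = 2 / (1 - α) * ε ^ α := by ring
            linarith
          linarith [hrw ▸ hfin]
        linarith
      · have hm' : m = 1/5 := min_eq_right h5.le
        rw [hm', integral_same]
        have h0 : (0:ℝ) ≤ ε ^ α := Real.rpow_nonneg hε0.le _
        have h2 : (0:ℝ) < 2 / (1 - α) := div_pos (by norm_num) (by linarith)
        positivity
    rw [hsplit]
    have hdist : (16 / (α + 1) + 2 / (1 - α)) * ε ^ α
        = 16 / (α + 1) * ε ^ α + 2 / (1 - α) * ε ^ α := by ring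
    rw [hdist]
    linarith
  exact hgoal
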